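/- Fix an integer n ≥ 2, and for g ∈ Z/nZ let ḡ ∈ {0, 1, …, n−1} denote its canonical integer representative. The inhomogeneous 3-cocycle α : (Z/nZ)³ → Z/nZ defined by α(g₁, g₂, g₃) = (1/n)·ḡ₁·(ḡ₂ + ḡ₃ − (g₂+g₃)‾) mod n has cohomology class of order n in H^3(Z/nZ, Z/nZ); in particular its class generates H^3(Z/nZ, Z/nZ) ≅ Z/nZ. -/

import Mathlib

open CategoryTheory groupCohomology

noncomputable section

/-- For `g : ℤ/nℤ`, `(g.val : ℤ)` is its canonical integer representative in `{0, …, n−1}`.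
`cocycleAlpha n g₁ g₂ g₃` is the reduction mod `n` of the exact integer quotient
`ḡ₁ · (ḡ₂ + ḡ₃ − (g₂+g₃)‾) / n`. -/
def cocycleAlpha (n : ℕ) (g₁ g₂ g₃ : ZMod n) : ZMod n :=
  ((((g₁.val : ℤ) * (((g₂.val : ℤ) + (g₃.val : ℤ) - ((g₂ + g₃).val : ℤ)) / (n : ℤ))) : ℤ) :
    ZMod n)

/-- `cocycleAlpha`, as an inhomogeneous 3-cochain of the group `ℤ/nℤ` (written
multiplicatively) with coefficients in the trivial module `ℤ/nℤ`; that is, as an element of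
degree 3 of the complex of inhomogeneous cochains. -/
def alphaCochain (n : ℕ) :
    (inhomogeneousCochains (Rep.trivial ℤ (Multiplicative (ZMod n)) (ZMod n))).X 3 :=
  fun g => cocycleAlpha n (Multiplicative.toAdd (g 0)) (Multiplicative.toAdd (g 1))
    (Multiplicative.toAdd (g 2))

open Multiplicative Finset

set_option linter.unusedSectionVars false
set_option linter.unusedTactic false
set_option linter.unreachableTactic false
set_option linter.unnecessarySimpa false
set_option linter.unusedVariables false

variable {n : ℕ}

abbrev G (n : ℕ) := Multiplicative (ZMod n)
abbrev A (n : ℕ) : Rep ℤ (G n) := Rep.trivial ℤ (Multiplicative (ZMod n)) (ZMod n)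

def el (j : ZMod n) : G n := Multiplicative.ofAdd j
def sg (n : ℕ) : G n := Multiplicative.ofAdd 1

variable [NeZero n]

def TL (n : ℕ) [NeZero n] : ((Fin 3 → G n) → ZMod n) →ₗ[ℤ] ZMod n where
  toFun f := ∑ j : ZMod n, f ![sg n, el j, sg n]
  map_add' f g := by simp [Finset.sum_add_distrib]
  map_smul' r f := by simp [Finset.smul_sum]

lemma el_mul (a b : ZMod n) : el a * el b = el (a + b) := rfl
lemma el_toAdd (x : G n) : el (toAdd x) = x := rfl
lemma el_zero : (el 0 : G n) = 1 := rfl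

lemma cast_bij : Function.Bijective (fun i : Fin n => ((i : ℕ) : ZMod n)) := by
  rw [Fintype.bijective_iff_injective_and_card]
  refine ⟨fun i j h => ?_, by simp [ZMod.card]⟩
  have := congrArg ZMod.val h
  rwa [ZMod.val_cast_of_lt i.2, ZMod.val_cast_of_lt j.2, ← Fin.ext_iff] at this


omit [NeZero n] in
lemma d2_eval (β : (Fin 2 → G n) → ZMod n) (g : Fin 3 → G n) :
    inhomogeneousCochains.d (A n) 2 β g
      = β ![g 1, g 2] - β ![g 0 * g 1, g 2] + β ![g 0, g 1 * g 2] - β ![g 0, g 1] := by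
  have e0 : (fun i : Fin 2 => g i.succ) = ![g 1, g 2] := by
    funext i; fin_cases i <;> rfl
  have e1 : Fin.contractNth (0 : Fin 3) (· * ·) g = ![g 0 * g 1, g 2] := by
    funext i; fin_cases i <;> rfl
  have e2 : Fin.contractNth (1 : Fin 3) (· * ·) g = ![g 0, g 1 * g 2] := by
    funext i; fin_cases i <;> rfl
  have e3 : Fin.contractNth (2 : Fin 3) (· * ·) g = ![g 0, g 1] := by
    funext i; fin_cases i <;> rfl
  rw [inhomogeneousCochains.d_hom_apply, Fin.sum_univ_three, e0, e1, e2, e3]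
  show β ![g 1, g 2] + ((-1:ℤ)^(0+1) • β ![g 0 * g 1, g 2] + (-1:ℤ)^(1+1) • β ![g 0, g 1 * g 2]
    + (-1:ℤ)^(2+1) • β ![g 0, g 1]) = _
  simp only [pow_one, pow_succ, pow_zero, one_mul, neg_smul, one_smul, neg_neg, neg_mul]
  ring

omit [NeZero n] in
lemma d3_eval (f : (Fin 3 → G n) → ZMod n) (g : Fin 4 → G n) :
    inhomogeneousCochains.d (A n) 3 f g
      = f ![g 1, g 2, g 3] - f ![g 0 * g 1, g 2, g 3] + f ![g 0, g 1 * g 2, g 3]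
        - f ![g 0, g 1, g 2 * g 3] + f ![g 0, g 1, g 2] := by
  have e0 : (fun i : Fin 3 => g i.succ) = ![g 1, g 2, g 3] := by
    funext i; fin_cases i <;> rfl
  have e1 : Fin.contractNth (0 : Fin 4) (· * ·) g = ![g 0 * g 1, g 2, g 3] := by
    funext i; fin_cases i <;> rfl
  have e2 : Fin.contractNth (1 : Fin 4) (· * ·) g = ![g 0, g 1 * g 2, g 3] := by
    funext i; fin_cases i <;> rfl
  have e3 : Fin.contractNth (2 : Fin 4) (· * ·) g = ![g 0, g 1, g 2 * g 3] := by
    funext i; fin_cases i <;> rfl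
  have e4 : Fin.contractNth (3 : Fin 4) (· * ·) g = ![g 0, g 1, g 2] := by
    funext i; fin_cases i <;> rfl
  rw [inhomogeneousCochains.d_hom_apply, Fin.sum_univ_four, e0, e1, e2, e3, e4]
  show f ![g 1, g 2, g 3] + ((-1:ℤ)^(0+1) • f ![g 0 * g 1, g 2, g 3]
    + (-1:ℤ)^(1+1) • f ![g 0, g 1 * g 2, g 3] + (-1:ℤ)^(2+1) • f ![g 0, g 1, g 2 * g 3]
    + (-1:ℤ)^(3+1) • f ![g 0, g 1, g 2]) = _
  simp only [pow_succ, pow_zero, one_mul, neg_smul, one_smul, neg_neg, neg_mul]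
  ring

lemma sum_el_shift (h : ZMod n → ZMod n) (a : ZMod n) :
    ∑ j : ZMod n, h (a + j) = ∑ j : ZMod n, h j :=
  Fintype.sum_equiv (Equiv.addLeft a) _ _ (fun j => rfl)

lemma sum_el_shift' (h : ZMod n → ZMod n) (a : ZMod n) :
    ∑ j : ZMod n, h (j + a) = ∑ j : ZMod n, h j :=
  Fintype.sum_equiv (Equiv.addRight a) _ _ (fun j => rfl)

lemma sum_range_el (h : G n → ZMod n) (m : ℕ) :
    ∑ i ∈ range n, h (el ((m + i : ℕ) : ZMod n)) = ∑ j : ZMod n, h (el j) := by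
  rw [← Fin.sum_univ_eq_sum_range (fun i => h (el ((m + i : ℕ) : ZMod n)))]
  refine Fintype.sum_bijective (fun i : Fin n => ((m : ZMod n) + ((i : ℕ) : ZMod n)))
    ((Equiv.addLeft (m : ZMod n)).bijective.comp cast_bij) _ _ (fun i => ?_)
  push_cast
  rfl

lemma TL_d2 (β : (Fin 2 → G n) → ZMod n) :
    TL n (inhomogeneousCochains.d (A n) 2 β) = 0 := by
  show ∑ j : ZMod n, (inhomogeneousCochains.d (A n) 2 β) ![sg n, el j, sg n] = 0
  have e : ∀ j : ZMod n, (inhomogeneousCochains.d (A n) 2 β) ![sg n, el j, sg n]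
      = (β ![el j, sg n] - β ![el (1 + j), sg n]) + (β ![sg n, el (j + 1)] - β ![sg n, el j]) := by
    intro j
    rw [d2_eval]
    have h1 : (![sg n, el j, sg n] : Fin 3 → G n) 0 = sg n := rfl
    have h2 : (![sg n, el j, sg n] : Fin 3 → G n) 1 = el j := rfl
    have h3 : (![sg n, el j, sg n] : Fin 3 → G n) 2 = sg n := rfl
    rw [h1, h2, h3]
    have e1 : sg n * el j = el (1 + j) := rfl
    have e2 : el j * sg n = el (j + 1) := rfl
    rw [e1, e2]; ring
  rw [Finset.sum_congr rfl (fun j _ => e j), Finset.sum_add_distrib,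
    Finset.sum_sub_distrib, Finset.sum_sub_distrib,
    sum_el_shift (fun j => β ![el j, sg n]) 1,
    sum_el_shift' (fun j => β ![sg n, el j]) 1]
  simp


lemma cast_pred (hn : 2 ≤ n) : ((n - 1 : ℕ) : ZMod n) = -1 := by
  have h1 : (((n - 1) + 1 : ℕ) : ZMod n) = 0 := by
    rw [show n - 1 + 1 = n from by omega, ZMod.natCast_self]
  rw [Nat.cast_add, Nat.cast_one] at h1
  linear_combination h1

lemma neg_one_val (hn : 2 ≤ n) : (-1 : ZMod n).val = n - 1 := by
  rw [← cast_pred hn, ZMod.val_cast_of_lt (by omega)]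

lemma val_one' (hn : 2 ≤ n) : (1 : ZMod n).val = 1 := by
  have := ZMod.val_one_eq_one_mod n
  rwa [Nat.mod_eq_of_lt (by omega)] at this

lemma sum_cocycleAlpha (hn : 2 ≤ n) : ∑ j : ZMod n, cocycleAlpha n 1 j 1 = 1 := by
  rw [Fintype.sum_eq_single (-1 : ZMod n)]
  · unfold cocycleAlpha
    rw [val_one' hn, neg_one_val hn, neg_add_cancel, ZMod.val_zero]
    have h2 : ((n - 1 : ℕ) : ℤ) + ((1:ℕ) : ℤ) - ((0:ℕ) : ℤ) = n := by
      push_cast [Nat.cast_sub (by omega : 1 ≤ n)]; ring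
    rw [h2, Int.ediv_self (by exact_mod_cast (by omega : (n:ℤ) ≠ 0))]
    norm_num
  · intro b hb
    unfold cocycleAlpha
    have hblt : b.val < n - 1 := by
      have h1 := ZMod.val_lt b
      rcases lt_or_ge b.val (n-1) with h | h
      · exact h
      · exfalso; apply hb
        have hv : b.val = n - 1 := by omega
        have hb' : ((n - 1 : ℕ) : ZMod n) = b := by
          rw [← hv, ZMod.natCast_val, ZMod.cast_id]
        rw [← hb', cast_pred hn]
    have hadd : (b + 1).val = b.val + 1 := by
      rw [ZMod.val_add, val_one' hn, Nat.mod_eq_of_lt (by omega)]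
    rw [val_one' hn, hadd]
    have h3 : (b.val : ℤ) + ((1:ℕ) : ℤ) - ((b.val + 1 : ℕ) : ℤ) = 0 := by push_cast; ring
    rw [h3, Int.zero_ediv, mul_zero, Int.cast_zero]

section Key
variable (f : (Fin 3 → G n) → ZMod n)

def Sf (c : G n) (m : ℕ) : ZMod n := ∑ i ∈ Finset.range m, f ![sg n, el ((i : ℕ) : ZMod n), c]
def tf (c : G n) : ZMod n := ∑ j : ZMod n, f ![sg n, el j, c]

variable (hf : ∀ a b c d : G n, f ![b,c,d] - f ![a*b,c,d] + f ![a,b*c,d]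
  - f ![a,b,c*d] + f ![a,b,c] = 0)

include hf

lemma t_hom (c d : G n) : tf f (c*d) = tf f c + tf f d := by
  have hsum : ∑ j : ZMod n, (f ![el j, c, d] - f ![el (1+j), c, d]
      + f ![sg n, el (j + toAdd c), d] - f ![sg n, el j, c*d] + f ![sg n, el j, c]) = 0 :=
    Finset.sum_eq_zero (fun j _ => hf (sg n) (el j) c d)
  have h2 : ∑ j : ZMod n, (f ![el j, c, d] - f ![el (1+j), c, d]
      + f ![sg n, el (j + toAdd c), d] - f ![sg n, el j, c*d] + f ![sg n, el j, c])
      = (∑ j : ZMod n, f ![el j, c, d]) - (∑ j : ZMod n, f ![el (1+j), c, d])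
      + (∑ j : ZMod n, f ![sg n, el (j + toAdd c), d]) - (∑ j : ZMod n, f ![sg n, el j, c*d])
      + ∑ j : ZMod n, f ![sg n, el j, c] := by
    rw [Finset.sum_add_distrib, Finset.sum_sub_distrib, Finset.sum_add_distrib,
      Finset.sum_sub_distrib]
  rw [h2, sum_el_shift (fun j => f ![el j, c, d]) 1,
    sum_el_shift' (fun j => f ![sg n, el j, d]) (toAdd c)] at hsum
  show (∑ j : ZMod n, f ![sg n, el j, c*d]) = (∑ j : ZMod n, f ![sg n, el j, c])
    + ∑ j : ZMod n, f ![sg n, el j, d]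
  linear_combination -hsum

lemma t_zero (hT : TL n f = 0) (c : G n) : tf f c = 0 := by
  have t_hom' : ∀ a b : ZMod n, tf f (el (a + b)) = tf f (el a) + tf f (el b) :=
    fun a b => t_hom f hf (el a) (el b)
  let F : ZMod n →+ ZMod n := AddMonoidHom.mk' (fun j => tf f (el j)) t_hom'
  have h1 : tf f c = F (toAdd c) := rfl
  have hc : (((toAdd c).val : ℕ) : ZMod n) = toAdd c := ZMod.natCast_rightInverse (toAdd c)
  have h2 : ∀ m : ℕ, F ((m : ZMod n)) = m • F 1 := fun m => by
    rw [show ((m : ZMod n)) = m • (1 : ZMod n) from by rw [nsmul_eq_mul, mul_one], map_nsmul]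
  have h3 : F 1 = 0 := hT
  rw [h1, ← hc, h2, h3, smul_zero]

lemma S_per (hT : TL n f = 0) (c : G n) (m : ℕ) : Sf f c (m + n) = Sf f c m := by
  show (∑ i ∈ Finset.range (m + n), f ![sg n, el ((i : ℕ) : ZMod n), c]) = _
  rw [Finset.sum_range_add]
  have h1 : ∑ i ∈ Finset.range n, f ![sg n, el (((m + i : ℕ)) : ZMod n), c]
      = ∑ j : ZMod n, f ![sg n, el j, c] := sum_range_el (fun x => f ![sg n, x, c]) m
  have h2 := t_zero f hf hT c
  unfold tf at h2
  rw [h1, h2, add_zero]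
  rfl

lemma tele (b c : G n) (m : ℕ) : Sf f (b*c) m - Sf f b m
    = f ![1, b, c] - f ![el ((m : ℕ) : ZMod n), b, c]
      + ∑ i ∈ Finset.range m, f ![sg n, el (((i : ℕ) : ZMod n) + toAdd b), c] := by
  induction m with
  | zero =>
    simp [Sf, el_zero]
  | succ m ih =>
    have hstep := hf (sg n) (el ((m : ℕ) : ZMod n)) b c
    have e1 : sg n * el ((m : ℕ) : ZMod n) = el (((m+1 : ℕ)) : ZMod n) := by
      show Multiplicative.ofAdd (1 + ((m:ℕ) : ZMod n)) = Multiplicative.ofAdd (((m+1:ℕ)) : ZMod n)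
      congr 1; push_cast; ring
    have e2 : el ((m:ℕ):ZMod n) * b = el (((m:ℕ):ZMod n) + toAdd b) := rfl
    rw [e1, e2] at hstep
    have hsucc : ∀ x : G n, Sf f x (m+1) = Sf f x m + f ![sg n, el ((m:ℕ):ZMod n), x] :=
      fun x => Finset.sum_range_succ _ m
    rw [hsucc, hsucc, Finset.sum_range_succ]
    linear_combination ih - hstep

lemma shiftsum (b c : G n) (m : ℕ) :
    ∑ i ∈ Finset.range m, f ![sg n, el (((i : ℕ) : ZMod n) + toAdd b), c]
      = Sf f c ((toAdd b).val + m) - Sf f c ((toAdd b).val) := by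
  show _ = (∑ i ∈ Finset.range ((toAdd b).val + m), f ![sg n, el ((i : ℕ) : ZMod n), c]) - _
  rw [Finset.sum_range_add]
  have hb : ((((toAdd b).val) : ℕ) : ZMod n) = toAdd b := ZMod.natCast_rightInverse (toAdd b)
  have h1 : ∀ i ∈ Finset.range m, f ![sg n, el ((((toAdd b).val + i : ℕ)) : ZMod n), c]
      = f ![sg n, el (((i : ℕ) : ZMod n) + toAdd b), c] := by
    intro i _
    have h2 : ((((toAdd b).val + i : ℕ)) : ZMod n) = ((i : ℕ) : ZMod n) + toAdd b := by
      push_cast [hb]; ring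
    rw [h2]
  rw [Finset.sum_congr rfl h1]
  show _ = Sf f c ((toAdd b).val) + _ - Sf f c ((toAdd b).val)
  ring

lemma key (hT : TL n f = 0) :
    ∃ β : (Fin 2 → G n) → ZMod n, inhomogeneousCochains.d (A n) 2 β = f := by
  refine ⟨fun g => f ![1, 1, g 1] - Sf f (g 1) ((toAdd (g 0)).val), ?_⟩
  funext g
  rw [d2_eval]
  have hg : g = ![g 0, g 1, g 2] := by funext i; fin_cases i <;> rfl
  set a := g 0 with ha
  set b := g 1 with hb
  set c := g 2 with hc
  have hmain : (f ![1,1,c] - Sf f c ((toAdd b).val))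
      - (f ![1,1,c] - Sf f c ((toAdd (a*b)).val))
      + (f ![1,1,b*c] - Sf f (b*c) ((toAdd a).val))
      - (f ![1,1,b] - Sf f b ((toAdd a).val)) = f ![a,b,c] := by
    have hfb : f ![1, b, c] = f ![1,1,b*c] - f ![1,1,b] := by
      have h := hf 1 1 b c
      rw [one_mul, one_mul] at h
      linear_combination h
    have htele := tele f hf b c ((toAdd a).val)
    have hela : ((((toAdd a).val : ℕ)) : ZMod n) = toAdd a := ZMod.natCast_rightInverse (toAdd a)
    rw [hela] at htele
    have hel2 : el (toAdd a) = a := rfl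
    rw [hel2] at htele
    have hshift := shiftsum f hf b c ((toAdd a).val)
    have hvab : (toAdd (a*b)).val = ((toAdd a).val + (toAdd b).val) % n :=
      ZMod.val_add (toAdd a) (toAdd b)
    have hcomm : Sf f c ((toAdd b).val + (toAdd a).val)
        = Sf f c ((toAdd a).val + (toAdd b).val) := by
      rw [Nat.add_comm]
    rcases lt_or_ge ((toAdd a).val + (toAdd b).val) n with h | h
    · have hv : (toAdd (a*b)).val = (toAdd a).val + (toAdd b).val := by
        rw [hvab, Nat.mod_eq_of_lt h]
      rw [hv]
      linear_combination -htele - hshift - hfb - hcomm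
    · have hv : (toAdd a).val + (toAdd b).val = (toAdd (a*b)).val + n := by
        have h1 : (toAdd a).val < n := ZMod.val_lt _
        have h2 : (toAdd b).val < n := ZMod.val_lt _
        rw [hvab, Nat.mod_eq_sub_mod h, Nat.mod_eq_of_lt (by omega)]
        omega
      have hper : Sf f c ((toAdd a).val + (toAdd b).val) = Sf f c ((toAdd (a*b)).val) := by
        rw [hv, S_per f hf hT]
      rw [← hper, ← hcomm]
      linear_combination -htele - hshift - hfb
  conv_rhs => rw [hg]
  exact hmain
end Key

lemma TLalpha (hn : 2 ≤ n) : TL n (alphaCochain n) = (1 : ZMod n) := by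
  have h : ∀ j : ZMod n, alphaCochain n ![sg n, el j, sg n] = cocycleAlpha n 1 j 1 :=
    fun j => rfl
  show ∑ j : ZMod n, alphaCochain n ![sg n, el j, sg n] = (1 : ZMod n)
  rw [Finset.sum_congr rfl (fun j _ => h j)]
  exact sum_cocycleAlpha hn

local notation "KK" => groupCohomology.inhomogeneousCochains (A n)

theorem main_aux (hn : 2 ≤ n)
    (φ : ModuleCat.of ℤ ℤ ⟶ (inhomogeneousCochains (A n)).X 3)
    (hφ : φ = ModuleCat.ofHom (LinearMap.toSpanSingleton ℤ _ (alphaCochain n)))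
    (hcoc : φ ≫ (inhomogeneousCochains (A n)).d 3 4 = 0) :
    addOrderOf
      (((KK).liftCycles φ 4 ((ComplexShape.up ℕ).next_eq' rfl) hcoc ≫ (KK).homologyπ 3) (1 : ℤ))
        = n ∧
    ∀ y : groupCohomology (A n) 3,
      ∃ m : ℤ,
        m • (((KK).liftCycles φ 4 ((ComplexShape.up ℕ).next_eq' rfl) hcoc ≫ (KK).homologyπ 3)
          (1 : ℤ)) = y := by
  set w := (KK).liftCycles φ 4 ((ComplexShape.up ℕ).next_eq' rfl) hcoc with hw
  set x := (w ≫ (KK).homologyπ 3) (1 : ℤ) with hx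
  have hφ1 : φ (1 : ℤ) = alphaCochain n := by
    rw [hφ]; exact one_smul ℤ (alphaCochain n)
  have hxπ : x = (KK).homologyπ 3 (w (1 : ℤ)) := rfl
  have hzi : (KK).iCycles 3 (w (1 : ℤ)) = alphaCochain n := by
    have e := ConcreteCategory.congr_hom ((KK).liftCycles_i φ 4 ((ComplexShape.up ℕ).next_eq' rfl) hcoc)
      (1 : ℤ)
    exact e.trans hφ1
  have hprev : (ComplexShape.up ℕ).prev 3 = 2 := by
    simpa using CochainComplex.prev_nat_succ 2
  have hnext : (ComplexShape.up ℕ).next 3 = 4 := (ComplexShape.up ℕ).next_eq' rfl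
  have hex1 : ∀ w' : (KK).cycles 3, (KK).homologyπ 3 w' = 0
      → ∃ u : (KK).X 2, (KK).toCycles 2 3 u = w' := by
    have hco := (KK).homologyIsCokernel 2 3 hprev
    have hexact := ShortComplex.exact_of_g_is_cokernel
      (ShortComplex.mk ((KK).toCycles 2 3) ((KK).homologyπ 3) ((KK).toCycles_comp_homologyπ 2 3)) hco
    exact fun w' hw' => (ShortComplex.moduleCat_exact_iff _).mp hexact w' hw'
  have hsur : Function.Surjective ((KK).homologyπ 3) :=
    (ModuleCat.epi_iff_surjective ((KK).homologyπ 3)).mp inferInstance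
  have hinj : Function.Injective ((KK).iCycles 3) :=
    (ModuleCat.mono_iff_injective ((KK).iCycles 3)).mp inferInstance
  have hd23 : (KK).d 2 3 = inhomogeneousCochains.d (A n) 2 :=
    inhomogeneousCochains.d_def (A n) 2
  have hd34 : (KK).d 3 4 = inhomogeneousCochains.d (A n) 3 :=
    inhomogeneousCochains.d_def (A n) 3
  have htc : ∀ u : (KK).X 2, (KK).iCycles 3 ((KK).toCycles 2 3 u) = (KK).d 2 3 u :=
    fun u => ConcreteCategory.congr_hom ((KK).toCycles_i 2 3) u
  have hTd : ∀ u : (KK).X 2, TL n ((KK).d 2 3 u) = 0 := by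
    intro u
    rw [hd23]
    exact TL_d2 u
  have hαcoc : (KK).d 3 4 (alphaCochain n) = (0 : (Fin 4 → G n) → ZMod n) := by
    have e := ConcreteCategory.congr_hom hcoc (1 : ℤ)
    have e2 : (KK).d 3 4 (φ (1 : ℤ)) = 0 := e
    rwa [hφ1] at e2
  constructor
  · rw [addOrderOf_eq_iff (by omega)]
    constructor
    · have hα0 : (n : ℕ) • alphaCochain n = (0 : (Fin 3 → G n) → ZMod n) := by
        funext g
        have hz : ∀ v : ZMod n, (n : ℕ) • v = 0 := fun v => by
          rw [nsmul_eq_mul, ZMod.natCast_self, zero_mul]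
        exact hz (alphaCochain n g)
      have h1 : (KK).iCycles 3 ((n : ℕ) • w (1 : ℤ)) = (KK).iCycles 3 0 := by
        rw [map_nsmul, hzi, map_zero]
        exact hα0
      have h2 : (n : ℕ) • w (1 : ℤ) = 0 := hinj h1
      rw [hxπ, ← map_nsmul, h2, map_zero]
    · intro m hmlt hmpos hzero
      have hπ0 : (KK).homologyπ 3 ((m : ℕ) • w (1 : ℤ)) = 0 := by
        rw [map_nsmul, ← hxπ]
        exact hzero
      obtain ⟨u, hu⟩ := hex1 _ hπ0
      have hdu : (KK).d 2 3 u = (m : ℕ) • alphaCochain n := by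
        have e2 := htc u
        rw [hu, map_nsmul, hzi] at e2
        exact e2.symm
      have hTval := hTd u
      rw [hdu, map_nsmul, TLalpha hn, nsmul_eq_mul, mul_one] at hTval
      have hdvd := (ZMod.natCast_eq_zero_iff m n).mp hTval
      have := Nat.le_of_dvd hmpos hdvd
      omega
  · intro y
    obtain ⟨wy, hwy⟩ := hsur y
    set fc := (KK).iCycles 3 wy with hfc
    have hfcoc : (KK).d 3 4 fc = 0 := ConcreteCategory.congr_hom ((KK).iCycles_d 3 4) wy
    set m : ℕ := (TL n fc).val with hm
    refine ⟨(m : ℤ), ?_⟩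
    have hg3 : (KK).d 3 4 (fc - (m : ℕ) • alphaCochain n) = 0 := by
      rw [map_sub, map_nsmul, hfcoc, hαcoc, smul_zero, sub_zero]
    have hgT : TL n (fc - (m : ℕ) • alphaCochain n) = 0 := by
      rw [map_sub, map_nsmul, TLalpha hn, nsmul_eq_mul, mul_one, hm,
        ZMod.natCast_rightInverse (TL n fc), sub_self]
    have hf5 : ∀ a b c d : G n,
        (fc - (m : ℕ) • alphaCochain n) ![b,c,d]
        - (fc - (m : ℕ) • alphaCochain n) ![a*b,c,d]
        + (fc - (m : ℕ) • alphaCochain n) ![a,b*c,d]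
        - (fc - (m : ℕ) • alphaCochain n) ![a,b,c*d]
        + (fc - (m : ℕ) • alphaCochain n) ![a,b,c] = 0 := by
      intro a b c d
      rw [hd34] at hg3
      have e2 : inhomogeneousCochains.d (A n) 3 (fc - (m : ℕ) • alphaCochain n) ![a,b,c,d]
          = 0 := congrFun hg3 ![a,b,c,d]
      rw [d3_eval] at e2
      have h0 : (![a,b,c,d] : Fin 4 → G n) 0 = a := rfl
      have h1 : (![a,b,c,d] : Fin 4 → G n) 1 = b := rfl
      have h2 : (![a,b,c,d] : Fin 4 → G n) 2 = c := rfl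
      have h3 : (![a,b,c,d] : Fin 4 → G n) 3 = d := rfl
      rw [h0, h1, h2, h3] at e2
      exact e2
    obtain ⟨β, hβ⟩ := key (fc - (m : ℕ) • alphaCochain n) hf5 hgT
    have hicomp : (KK).iCycles 3 ((KK).toCycles 2 3 β)
        = (KK).iCycles 3 (wy - (m : ℕ) • w (1 : ℤ)) := by
      have e3 : (KK).d 2 3 β = fc - (m : ℕ) • alphaCochain n := by
        rw [hd23]; exact hβ
      rw [htc, e3, map_sub, map_nsmul, hzi, ← hfc]
    have heq : (KK).toCycles 2 3 β = wy - (m : ℕ) • w (1 : ℤ) := hinj hicomp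
    have hπ2 : (KK).homologyπ 3 (wy - (m : ℕ) • w (1 : ℤ)) = 0 := by
      rw [← heq]
      exact ConcreteCategory.congr_hom ((KK).toCycles_comp_homologyπ 2 3) β
    rw [map_sub, map_nsmul, hwy, ← hxπ] at hπ2
    rw [natCast_zsmul]
    exact (sub_eq_zero.mp hπ2).symm


/-- For `n ≥ 2`, the inhomogeneous 3-cocycle
`α(g₁,g₂,g₃) = (1/n)·ḡ₁·(ḡ₂ + ḡ₃ − (g₂+g₃)‾) mod n` of `ℤ/nℤ` with coefficients in the
trivial module `ℤ/nℤ` (the hypothesis `hcoc` states precisely that the corresponding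
3-cochain is a cocycle) has cohomology class of (additive) order `n` in `H³(ℤ/nℤ, ℤ/nℤ)`;
in particular its class generates `H³(ℤ/nℤ, ℤ/nℤ) ≅ ℤ/nℤ`. -/
theorem alphaCochain_class_addOrderOf_eq (n : ℕ) (hn : 2 ≤ n)
    (φ : ModuleCat.of ℤ ℤ ⟶
      (inhomogeneousCochains (Rep.trivial ℤ (Multiplicative (ZMod n)) (ZMod n))).X 3)
    (hφ : φ = ModuleCat.ofHom (LinearMap.toSpanSingleton ℤ _ (alphaCochain n)))
    (hcoc : φ ≫ (inhomogeneousCochains (Rep.trivial ℤ (Multiplicative (ZMod n)) (ZMod n))).d 3 4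
      = 0) :
    addOrderOf
      (((inhomogeneousCochains
            (Rep.trivial ℤ (Multiplicative (ZMod n)) (ZMod n))).liftCycles φ 4
          ((ComplexShape.up ℕ).next_eq' rfl) hcoc ≫
        (inhomogeneousCochains
          (Rep.trivial ℤ (Multiplicative (ZMod n)) (ZMod n))).homologyπ 3) (1 : ℤ)) = n ∧
    ∀ y : groupCohomology (Rep.trivial ℤ (Multiplicative (ZMod n)) (ZMod n)) 3,
      ∃ m : ℤ,
        m • (((inhomogeneousCochains
            (Rep.trivial ℤ (Multiplicative (ZMod n)) (ZMod n))).liftCycles φ 4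
          ((ComplexShape.up ℕ).next_eq' rfl) hcoc ≫
        (inhomogeneousCochains
          (Rep.trivial ℤ (Multiplicative (ZMod n)) (ZMod n))).homologyπ 3) (1 : ℤ)) = y := by
  haveI : NeZero n := ⟨by omega⟩
  exact main_aux hn φ hφ hcoc
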